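/- arXiv:2208.08326 — 4 statements merged into one kernel-verified Lean document; each statement's English description precedes it below -/
import Mathlib

section
/- Let λ : [0,1] → [0,1] be continuous with λ(0) = 1, let m ∈ ℕ with m ≥ 1 and x ≥ 0. Then for every bounded continuous f : [0,∞) → ℝ, lim_{n→∞} Σ_{r=0}^{mn} C(mn,r) λ(x/n)^r (1 − λ(x/n))^{mn−r} Σ_{k=0}^{r} C(r,k) (x/n)^k (1 − x/n)^{r−k} f( k/m + (1 − r/(mn)) x ) = Σ_{j=0}^{∞} e^{−mx}(mx)^j/j! · f(j/m) (the left-hand side being defined for all n ≥ x); that is, lim_{n→∞} A_{mn,λ}( f(nt); x/n ) = B_m^{[0]}( f(t); x ). -/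
set_option maxHeartbeats 1000000
open Filter Topology Finset


lemma sum_triangle {M : Type*} [AddCommMonoid M] (N : ℕ) (F : ℕ → ℕ → M) :
    ∑ r ∈ range (N+1), ∑ k ∈ range (r+1), F r k
      = ∑ k ∈ range (N+1), ∑ r ∈ Finset.Ico k (N+1), F r k := by
  have h1 : ∀ r ∈ range (N+1), ∑ k ∈ range (r+1), F r k
      = ∑ k ∈ range (N+1), if k ≤ r then F r k else 0 := by
    intro r hr
    rw [Finset.mem_range, Nat.lt_succ] at hr
    rw [← Finset.sum_filter]
    congr 1
    ext k
    simp [Nat.lt_succ]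
    omega
  rw [Finset.sum_congr rfl h1, Finset.sum_comm]
  refine Finset.sum_congr rfl fun k hk => ?_
  rw [← Finset.sum_filter]
  congr 1
  ext r
  simp [Nat.lt_succ, Finset.mem_Ico]
  omega

lemma binom_total (N : ℕ) (a b : ℝ) :
    ∑ k ∈ range (N+1), (N.choose k : ℝ) * a^k * b^(N-k) = (a+b)^N := by
  rw [add_pow]; exact Finset.sum_congr rfl fun k hk => by ring

lemma binom_mean (N : ℕ) (a b : ℝ) :
    ∑ k ∈ range (N+1), (k : ℝ) * ((N.choose k : ℝ) * a^k * b^(N-k))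
      = N * a * (a+b)^(N-1) := by
  cases N with
  | zero => simp
  | succ M =>
    rw [Finset.sum_range_succ']
    simp only [Nat.cast_zero, zero_mul, add_zero]
    have key : ∀ j, ((j+1 : ℕ) : ℝ) * (((M+1).choose (j+1) : ℝ) * a^(j+1) * b^(M+1-(j+1)))
        = ((M+1 : ℕ) : ℝ) * a * ((M.choose j : ℝ) * a^j * b^(M-j)) := by
      intro j
      have h : (M+1) * M.choose j = (M+1).choose (j+1) * (j+1) := Nat.add_one_mul_choose_eq M j
      have h' : ((M+1) * M.choose j : ℕ) = ((M+1).choose (j+1) * (j+1) : ℕ) := h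
      have h'' : ((M+1 : ℝ)) * (M.choose j : ℝ) = ((M+1).choose (j+1) : ℝ) * ((j:ℝ)+1) := by
        exact_mod_cast h'
      have hsub : M + 1 - (j+1) = M - j := by omega
      rw [hsub, pow_succ]
      push_cast
      calc ((j:ℝ)+1) * ((((M+1).choose (j+1) : ℝ)) * (a^j * a) * b^(M-j))
          = (((M+1).choose (j+1) : ℝ) * ((j:ℝ)+1)) * (a^j * a * b^(M-j)) := by ring
        _ = (((M:ℝ)+1) * (M.choose j : ℝ)) * (a^j * a * b^(M-j)) := by rw [← h'']
        _ = ((M:ℝ)+1) * a * ((M.choose j : ℝ) * a^j * b^(M-j)) := by ring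
    rw [Finset.sum_congr rfl fun j _ => key j, ← Finset.mul_sum, binom_total M a b]
    push_cast
    ring

lemma thinning_inner (N k : ℕ) (hk : k ≤ N) (u p : ℝ) :
    ∑ r ∈ Finset.Ico k (N+1),
      ((N.choose r : ℝ) * u^r * (1-u)^(N-r)) * ((r.choose k : ℝ) * p^k * (1-p)^(r-k))
      = (N.choose k : ℝ) * (u*p)^k * (1-u*p)^(N-k) := by
  rw [Finset.sum_Ico_eq_sum_range]
  have hNk : N + 1 - k = (N - k) + 1 := by omega
  rw [hNk]
  have key : ∀ j ∈ range ((N-k)+1),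
      ((N.choose (k+j) : ℝ) * u^(k+j) * (1-u)^(N-(k+j))) *
        (((k+j).choose k : ℝ) * p^k * (1-p)^((k+j)-k))
      = ((N.choose k : ℝ) * (u*p)^k) * (((N-k).choose j : ℝ) * (u*(1-p))^j * (1-u)^((N-k)-j)) := by
    intro j hj
    rw [Finset.mem_range] at hj
    have hkj : k + j ≤ N := by omega
    have hc : N.choose (k+j) * (k+j).choose k = N.choose k * (N-k).choose ((k+j)-k) :=
      Nat.choose_mul (Nat.le_add_right k j)
    have hjk : (k+j) - k = j := by omega
    rw [hjk] at hc ⊢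
    have hc' : ((N.choose (k+j) : ℝ)) * ((k+j).choose k : ℝ) = (N.choose k : ℝ) * ((N-k).choose j : ℝ) := by
      exact_mod_cast congrArg (Nat.cast : ℕ → ℝ) hc
    have hsub : N - (k+j) = (N-k) - j := by omega
    rw [hsub, pow_add, mul_pow, mul_pow]
    calc (N.choose (k+j) : ℝ) * (u^k * u^j) * (1-u)^((N-k)-j) * (((k+j).choose k : ℝ) * p^k * (1-p)^j)
        = ((N.choose (k+j) : ℝ) * ((k+j).choose k : ℝ)) * (u^k * p^k) * (u^j * (1-p)^j * (1-u)^((N-k)-j)) := by ring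
      _ = ((N.choose k : ℝ) * ((N-k).choose j : ℝ)) * (u^k * p^k) * (u^j * (1-p)^j * (1-u)^((N-k)-j)) := by rw [hc']
      _ = ((N.choose k : ℝ) * (u^k*p^k)) * (((N-k).choose j : ℝ) * (u^j*(1-p)^j) * (1-u)^((N-k)-j)) := by ring
  rw [Finset.sum_congr rfl key, ← Finset.mul_sum, binom_total (N-k) (u*(1-p)) (1-u)]
  have : u*(1-p) + (1-u) = 1 - u*p := by ring
  rw [this, mul_assoc]


lemma pmf_nonneg (N k : ℕ) {a : ℝ} (h0 : 0 ≤ a) (h1 : a ≤ 1) :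
    0 ≤ (N.choose k : ℝ) * a^k * (1-a)^(N-k) :=
  mul_nonneg (mul_nonneg (Nat.cast_nonneg _) (pow_nonneg h0 _)) (pow_nonneg (by linarith) _)

lemma markov_tail (N K : ℕ) {a : ℝ} (h0 : 0 ≤ a) (h1 : a ≤ 1) :
    ∑ k ∈ Finset.Ico (K+1) (N+1), (N.choose k : ℝ) * a^k * (1-a)^(N-k)
      ≤ N * a / (K+1) := by
  have step1 : ∑ k ∈ Finset.Ico (K+1) (N+1), (N.choose k : ℝ) * a^k * (1-a)^(N-k)
      ≤ ∑ k ∈ Finset.Ico (K+1) (N+1),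
          ((k:ℝ)/(K+1)) * ((N.choose k : ℝ) * a^k * (1-a)^(N-k)) := by
    refine Finset.sum_le_sum fun k hk => ?_
    rw [Finset.mem_Ico] at hk
    have h1k : (1:ℝ) ≤ (k:ℝ)/(K+1) := by
      rw [le_div_iff₀ (by positivity)]
      have : (K:ℝ)+1 ≤ k := by exact_mod_cast hk.1
      linarith
    nlinarith [pmf_nonneg N k h0 h1]
  have step2 : ∑ k ∈ Finset.Ico (K+1) (N+1),
        ((k:ℝ)/(K+1)) * ((N.choose k : ℝ) * a^k * (1-a)^(N-k))
      ≤ ∑ k ∈ range (N+1), ((k:ℝ)/(K+1)) * ((N.choose k : ℝ) * a^k * (1-a)^(N-k)) := by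
    refine Finset.sum_le_sum_of_subset_of_nonneg ?_ fun k hk _ => ?_
    · intro k hk
      rw [Finset.mem_Ico] at hk
      exact Finset.mem_range.2 hk.2
    · exact mul_nonneg (by positivity) (pmf_nonneg N k h0 h1)
  have step3 : ∑ k ∈ range (N+1), ((k:ℝ)/(K+1)) * ((N.choose k : ℝ) * a^k * (1-a)^(N-k))
      = N * a / (K+1) := by
    have : ∀ k ∈ range (N+1), ((k:ℝ)/(K+1)) * ((N.choose k : ℝ) * a^k * (1-a)^(N-k))
        = (1/((K:ℝ)+1)) * ((k:ℝ) * ((N.choose k : ℝ) * a^k * (1-a)^(N-k))) := by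
      intro k _; ring
    rw [Finset.sum_congr rfl this, ← Finset.mul_sum, binom_mean]
    rw [show a + (1-a) = 1 by ring, one_pow]
    ring
  linarith

lemma thinning (N : ℕ) (u p : ℝ) (g : ℕ → ℝ) :
    ∑ r ∈ range (N+1), (N.choose r : ℝ) * u^r * (1-u)^(N-r) *
        ∑ k ∈ range (r+1), (r.choose k : ℝ) * p^k * (1-p)^(r-k) * g k
      = ∑ k ∈ range (N+1), (N.choose k : ℝ) * (u*p)^k * (1-u*p)^(N-k) * g k := by
  have h1 : ∑ r ∈ range (N+1), (N.choose r : ℝ) * u^r * (1-u)^(N-r) *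
        ∑ k ∈ range (r+1), (r.choose k : ℝ) * p^k * (1-p)^(r-k) * g k
      = ∑ r ∈ range (N+1), ∑ k ∈ range (r+1),
          (((N.choose r : ℝ) * u^r * (1-u)^(N-r)) * ((r.choose k : ℝ) * p^k * (1-p)^(r-k))) * g k := by
    refine Finset.sum_congr rfl fun r _ => ?_
    rw [Finset.mul_sum]
    refine Finset.sum_congr rfl fun k _ => ?_
    ring
  rw [h1, sum_triangle]
  refine Finset.sum_congr rfl fun k hk => ?_
  rw [Finset.mem_range, Nat.lt_succ] at hk
  rw [show ∀ s : Finset ℕ, ∑ r ∈ s, (((N.choose r : ℝ) * u^r * (1-u)^(N-r)) * ((r.choose k : ℝ) * p^k * (1-p)^(r-k))) * g k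
      = (∑ r ∈ s, ((N.choose r : ℝ) * u^r * (1-u)^(N-r)) * ((r.choose k : ℝ) * p^k * (1-p)^(r-k))) * g k
    from fun s => (Finset.sum_mul _ _ _).symm]
  rw [thinning_inner N k hk u p]


lemma choose_q_tendsto (μ : ℝ) (N : ℕ → ℕ) (q : ℕ → ℝ)
    (hN : Tendsto N atTop atTop)
    (hq : Tendsto (fun n => (N n : ℝ) * q n) atTop (𝓝 μ))
    (hq0 : Tendsto q atTop (𝓝 0)) (k : ℕ) :
    Tendsto (fun n => ((N n).choose k : ℝ) * q n ^ k) atTop (𝓝 (μ ^ k / k.factorial)) := by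
  induction k with
  | zero => simp
  | succ k ih =>
    have hev : ∀ᶠ n in atTop, ((N n).choose (k+1) : ℝ) * q n ^ (k+1)
        = (((N n).choose k : ℝ) * q n ^ k) * (((N n : ℝ) * q n - (k : ℝ) * q n) / ((k:ℝ)+1)) := by
      filter_upwards [hN.eventually_ge_atTop k] with n hn
      have h := Nat.choose_succ_right_eq (N n) k
      have hcast : ((N n).choose (k+1) : ℝ) * ((k:ℝ)+1) = ((N n).choose k : ℝ) * ((N n : ℝ) - k) := by
        have := congrArg (Nat.cast : ℕ → ℝ) h
        push_cast [Nat.cast_sub hn] at this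
        linarith [this]
      have hk1 : ((k:ℝ)+1) ≠ 0 := by positivity
      calc ((N n).choose (k+1):ℝ) * q n^(k+1)
          = (((N n).choose (k+1):ℝ) * ((k:ℝ)+1)) * q n^(k+1) / ((k:ℝ)+1) := by field_simp
        _ = (((N n).choose k:ℝ) * ((N n:ℝ) - k)) * q n^(k+1) / ((k:ℝ)+1) := by rw [hcast]
        _ = ((N n).choose k:ℝ) * q n^k * (((N n:ℝ)*q n - (k:ℝ)*q n)/((k:ℝ)+1)) := by
            rw [pow_succ]; ring
    have hlim : Tendsto (fun n => (((N n).choose k : ℝ) * q n ^ k) *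
        (((N n : ℝ) * q n - (k : ℝ) * q n) / ((k:ℝ)+1))) atTop
        (𝓝 ((μ ^ k / k.factorial) * ((μ - (k:ℝ)*0) / ((k:ℝ)+1)))) :=
      ih.mul ((hq.sub ((tendsto_const_nhds).mul hq0)).div_const _)
    have heq : (μ ^ k / k.factorial) * ((μ - (k:ℝ)*0) / ((k:ℝ)+1)) = μ ^ (k+1) / (k+1).factorial := by
      rw [Nat.factorial_succ]
      push_cast
      have h1 : (k.factorial : ℝ) ≠ 0 := by positivity
      field_simp
      ring
    rw [heq] at hlim
    exact hlim.congr' (hev.mono fun n h => h.symm)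

lemma one_sub_q_pow_tendsto (μ : ℝ) (N : ℕ → ℕ) (q : ℕ → ℝ)
    (hq : Tendsto (fun n => (N n : ℝ) * q n) atTop (𝓝 μ))
    (hq0 : Tendsto q atTop (𝓝 0)) (hqnn : ∀ᶠ n in atTop, 0 ≤ q n) :
    Tendsto (fun n => (1 - q n) ^ (N n)) atTop (𝓝 (Real.exp (-μ))) := by
  have hsmall : ∀ᶠ n in atTop, q n < 1 := by
    filter_upwards [hq0.eventually (gt_mem_nhds (by norm_num : (0:ℝ) < 1/2))] with n hn
    linarith
  have hupper : ∀ᶠ n in atTop, (N n : ℝ) * Real.log (1 - q n) ≤ -((N n : ℝ) * q n) := by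
    filter_upwards [hsmall] with n hn
    have h1 : Real.log (1 - q n) ≤ (1 - q n) - 1 := Real.log_le_sub_one_of_pos (by linarith)
    have : Real.log (1 - q n) ≤ -q n := by linarith
    nlinarith [(Nat.cast_nonneg (N n) : (0:ℝ) ≤ (N n : ℝ))]
  have hlower : ∀ᶠ n in atTop, -((N n : ℝ) * q n) * (1 - q n)⁻¹ ≤ (N n : ℝ) * Real.log (1 - q n) := by
    filter_upwards [hsmall, hqnn] with n hn hnn
    have hpos : (0:ℝ) < 1 - q n := by linarith
    have h1 : Real.log (1 - q n)⁻¹ ≤ (1 - q n)⁻¹ - 1 := Real.log_le_sub_one_of_pos (by positivity)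
    rw [Real.log_inv] at h1
    have h3 : (1 - q n)⁻¹ - 1 = q n * (1 - q n)⁻¹ := by field_simp; ring
    have h4 : -(q n * (1 - q n)⁻¹) ≤ Real.log (1 - q n) := by rw [← h3]; linarith
    calc -((N n : ℝ) * q n) * (1 - q n)⁻¹ = (N n : ℝ) * (-(q n * (1 - q n)⁻¹)) := by ring
      _ ≤ (N n : ℝ) * Real.log (1 - q n) :=
        mul_le_mul_of_nonneg_left h4 (Nat.cast_nonneg _)
  have hlog : Tendsto (fun n => (N n : ℝ) * Real.log (1 - q n)) atTop (𝓝 (-μ)) := by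
    have hub : Tendsto (fun n => -((N n : ℝ) * q n)) atTop (𝓝 (-μ)) := hq.neg
    have hq1 : Tendsto (fun n => (1 - q n)) atTop (𝓝 (1:ℝ)) := by
      have := (tendsto_const_nhds : Tendsto (fun _ : ℕ => (1:ℝ)) atTop (𝓝 1)).sub hq0
      simpa using this
    have hinv : Tendsto (fun n => (1 - q n)⁻¹) atTop (𝓝 (1:ℝ)) := by
      have := hq1.inv₀ (one_ne_zero)
      simpa using this
    have hlb : Tendsto (fun n => -((N n : ℝ) * q n) * (1 - q n)⁻¹) atTop (𝓝 (-μ * 1)) :=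
      hub.mul hinv
    rw [mul_one] at hlb
    exact tendsto_of_tendsto_of_tendsto_of_le_of_le' hlb hub hlower hupper
  have hcomp := (Real.continuous_exp.tendsto _).comp hlog
  refine hcomp.congr' ?_
  filter_upwards [hsmall] with n hn
  have hpos : (0:ℝ) < 1 - q n := by linarith
  simp only [Function.comp]
  rw [← Real.exp_log hpos, ← Real.exp_nat_mul, Real.exp_log hpos]

lemma binom_to_poisson (μ : ℝ) (hμ : 0 ≤ μ) (M : ℝ) (g : ℕ → ℝ) (hg : ∀ k, |g k| ≤ M)
    (N : ℕ → ℕ) (q : ℕ → ℝ) (hN : Tendsto N atTop atTop)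
    (hq01 : ∀ᶠ n in atTop, q n ∈ Set.Icc (0:ℝ) 1)
    (hq : Tendsto (fun n => (N n : ℝ) * q n) atTop (𝓝 μ)) :
    Tendsto (fun n => ∑ k ∈ range (N n + 1),
        ((N n).choose k : ℝ) * q n ^ k * (1 - q n)^(N n - k) * g k) atTop
      (𝓝 (∑' k : ℕ, Real.exp (-μ) * μ^k / (k.factorial : ℝ) * g k)) := by
  have hM0 : 0 ≤ M := le_trans (abs_nonneg _) (hg 0)
  have hNr : Tendsto (fun n => (N n : ℝ)) atTop atTop :=
    tendsto_natCast_atTop_atTop.comp hN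
  have hq0 : Tendsto q atTop (𝓝 0) := by
    have h1 : Tendsto (fun n => ((N n:ℝ) * q n) * (N n : ℝ)⁻¹) atTop (𝓝 (μ * 0)) :=
      hq.mul hNr.inv_tendsto_atTop
    rw [mul_zero] at h1
    refine h1.congr' ?_
    filter_upwards [hN.eventually_ge_atTop 1] with n hn
    have hne : (N n : ℝ) ≠ 0 := by
      have : (0:ℕ) < N n := hn
      exact_mod_cast this.ne'
    field_simp
  -- pointwise pmf convergence
  have hpmf : ∀ k, Tendsto (fun n => ((N n).choose k : ℝ) * q n ^ k * (1 - q n)^(N n - k))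
      atTop (𝓝 (Real.exp (-μ) * μ^k / (k.factorial:ℝ))) := by
    intro k
    have h1 := choose_q_tendsto μ N q hN hq hq0 k
    have h2 : Tendsto (fun n => (1 - q n)^(N n - k)) atTop (𝓝 (Real.exp (-μ))) := by
      have hq' : Tendsto (fun n => ((N n - k : ℕ) : ℝ) * q n) atTop (𝓝 μ) := by
        have h3 : Tendsto (fun n => (N n : ℝ) * q n - (k:ℝ) * q n) atTop (𝓝 (μ - (k:ℝ)*0)) :=
          hq.sub (tendsto_const_nhds.mul hq0)
        rw [mul_zero, sub_zero] at h3
        refine h3.congr' ?_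
        filter_upwards [hN.eventually_ge_atTop k] with n hn
        rw [Nat.cast_sub hn]; ring
      exact one_sub_q_pow_tendsto μ (fun n => N n - k) q hq' hq0
        (hq01.mono fun n h => h.1)
    have h3 := h1.mul h2
    have : μ ^ k / (k.factorial:ℝ) * Real.exp (-μ) = Real.exp (-μ) * μ^k / (k.factorial:ℝ) := by
      ring
    rw [this] at h3
    exact h3
  -- summability
  have hsumM : Summable (fun k : ℕ => Real.exp (-μ) * μ^k / (k.factorial:ℝ) * M) := by
    have := (Real.summable_pow_div_factorial μ).mul_left (Real.exp (-μ))
    have := this.mul_right M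
    refine this.congr fun k => ?_
    ring
  have habs_le : ∀ k : ℕ, |Real.exp (-μ) * μ^k / (k.factorial:ℝ) * g k|
      ≤ Real.exp (-μ) * μ^k / (k.factorial:ℝ) * M := by
    intro k
    have hp : 0 ≤ Real.exp (-μ) * μ^k / (k.factorial:ℝ) := by positivity
    rw [abs_mul, abs_of_nonneg hp]
    exact mul_le_mul_of_nonneg_left (hg k) hp
  have hsumG : Summable (fun k : ℕ => Real.exp (-μ) * μ^k / (k.factorial:ℝ) * g k) := by
    refine Summable.of_abs (Summable.of_nonneg_of_le (fun k => abs_nonneg _) habs_le hsumM)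
  set P : ℕ → ℝ := fun k => Real.exp (-μ) * μ^k / (k.factorial:ℝ) * g k with hP
  rw [Metric.tendsto_atTop]
  intro ε hε
  -- choose K
  have t1 : Tendsto (fun K : ℕ => ∑' j : ℕ, (Real.exp (-μ) * μ^(j+(K+1)) / ((j+(K+1)).factorial:ℝ) * M))
      atTop (𝓝 0) :=
    (tendsto_sum_nat_add (fun k => Real.exp (-μ) * μ^k / (k.factorial:ℝ) * M)).comp
      (tendsto_add_atTop_nat 1)
  have t2 : Tendsto (fun K : ℕ => M * (μ+1) / ((K:ℝ)+1)) atTop (𝓝 0) := by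
    have h := tendsto_one_div_add_atTop_nhds_zero_nat.const_mul (M * (μ+1))
    rw [mul_zero] at h
    refine h.congr fun K => ?_
    field_simp
  obtain ⟨K, hK1, hK2⟩ : ∃ K : ℕ,
      (∑' j : ℕ, (Real.exp (-μ) * μ^(j+(K+1)) / ((j+(K+1)).factorial:ℝ) * M)) < ε/4 ∧
      M * (μ+1) / ((K:ℝ)+1) < ε/4 := by
    have e1 := t1.eventually (gt_mem_nhds (by linarith : (0:ℝ) < ε/4))
    have e2 := t2.eventually (gt_mem_nhds (by linarith : (0:ℝ) < ε/4))
    exact (e1.and e2).exists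
  -- head convergence
  have hhead : Tendsto (fun n => ∑ k ∈ range (K+1),
      ((N n).choose k : ℝ) * q n ^ k * (1 - q n)^(N n - k) * g k) atTop
      (𝓝 (∑ k ∈ range (K+1), P k)) :=
    tendsto_finset_sum _ fun k _ => (hpmf k).mul_const (g k)
  have hheadev : ∀ᶠ n in atTop, |(∑ k ∈ range (K+1),
      ((N n).choose k : ℝ) * q n ^ k * (1 - q n)^(N n - k) * g k) - ∑ k ∈ range (K+1), P k| < ε/4 := by
    have := Metric.tendsto_nhds.1 hhead (ε/4) (by linarith)
    simpa [Real.dist_eq] using this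
  have hqle : ∀ᶠ n in atTop, (N n : ℝ) * q n ≤ μ + 1 :=
    hq.eventually_le_const (by linarith : μ < μ + 1)
  obtain ⟨n₀, hn₀⟩ := eventually_atTop.1
    (((hq01.and (hN.eventually_ge_atTop (K+1))).and hqle).and hheadev)
  refine ⟨n₀, fun n hn => ?_⟩
  obtain ⟨⟨⟨⟨hq0n, hq1n⟩, hNK⟩, hqμ⟩, hhd⟩ := hn₀ n hn
  -- split sums
  have hsplit : ∑ k ∈ range (N n + 1),
        ((N n).choose k : ℝ) * q n ^ k * (1 - q n)^(N n - k) * g k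
      = (∑ k ∈ range (K+1), ((N n).choose k : ℝ) * q n ^ k * (1 - q n)^(N n - k) * g k)
        + ∑ k ∈ Finset.Ico (K+1) (N n + 1),
            ((N n).choose k : ℝ) * q n ^ k * (1 - q n)^(N n - k) * g k := by
    rw [Finset.range_eq_Ico, ← Finset.sum_Ico_consecutive _ (Nat.zero_le (K+1)) (by omega),
      ← Finset.range_eq_Ico]
  have hLsplit : (∑' k, P k) = (∑ k ∈ range (K+1), P k) + ∑' j : ℕ, P (j + (K+1)) :=
    (Summable.sum_add_tsum_nat_add (K+1) hsumG).symm
  -- tail bounds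
  have htailB : |∑ k ∈ Finset.Ico (K+1) (N n + 1),
      ((N n).choose k : ℝ) * q n ^ k * (1 - q n)^(N n - k) * g k| ≤ M * (μ+1) / ((K:ℝ)+1) := by
    calc |∑ k ∈ Finset.Ico (K+1) (N n + 1),
        ((N n).choose k : ℝ) * q n ^ k * (1 - q n)^(N n - k) * g k|
        ≤ ∑ k ∈ Finset.Ico (K+1) (N n + 1),
            |((N n).choose k : ℝ) * q n ^ k * (1 - q n)^(N n - k) * g k| :=
          Finset.abs_sum_le_sum_abs _ _
      _ ≤ ∑ k ∈ Finset.Ico (K+1) (N n + 1),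
            (((N n).choose k : ℝ) * q n ^ k * (1 - q n)^(N n - k)) * M := by
          refine Finset.sum_le_sum fun k _ => ?_
          rw [abs_mul, abs_of_nonneg (pmf_nonneg (N n) k hq0n hq1n)]
          exact mul_le_mul_of_nonneg_left (hg k) (pmf_nonneg (N n) k hq0n hq1n)
      _ = M * ∑ k ∈ Finset.Ico (K+1) (N n + 1),
            (((N n).choose k : ℝ) * q n ^ k * (1 - q n)^(N n - k)) := by
          rw [Finset.mul_sum]; exact Finset.sum_congr rfl fun k _ => by ring
      _ ≤ M * ((N n : ℝ) * q n / ((K:ℝ)+1)) := by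
          refine mul_le_mul_of_nonneg_left ?_ hM0
          have := markov_tail (N n) K hq0n hq1n
          exact this
      _ ≤ M * ((μ+1) / ((K:ℝ)+1)) := by
          refine mul_le_mul_of_nonneg_left ?_ hM0
          gcongr
      _ = M * (μ+1) / ((K:ℝ)+1) := by ring
  have htailP : |∑' j : ℕ, P (j + (K+1))| ≤
      ∑' j : ℕ, (Real.exp (-μ) * μ^(j+(K+1)) / ((j+(K+1)).factorial:ℝ) * M) := by
    have hs1 : Summable (fun j : ℕ => P (j + (K+1))) := (summable_nat_add_iff (K+1)).2 hsumG
    have hs2 : Summable (fun j : ℕ => |P (j + (K+1))|) := by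
      refine Summable.of_nonneg_of_le (fun j => abs_nonneg _) (fun j => habs_le _)
        ((summable_nat_add_iff (K+1)).2 hsumM)
    have h5 : ‖∑' j : ℕ, P (j + (K+1))‖ ≤ ∑' j : ℕ, ‖P (j + (K+1))‖ :=
      norm_tsum_le_tsum_norm (by simpa only [Real.norm_eq_abs] using hs2)
    simp only [Real.norm_eq_abs] at h5
    calc |∑' j : ℕ, P (j + (K+1))| ≤ ∑' j : ℕ, |P (j + (K+1))| := h5
      _ ≤ ∑' j : ℕ, (Real.exp (-μ) * μ^(j+(K+1)) / ((j+(K+1)).factorial:ℝ) * M) :=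
          Summable.tsum_le_tsum (fun j => habs_le _) hs2 ((summable_nat_add_iff (K+1)).2 hsumM)
  -- assemble
  rw [Real.dist_eq, hsplit, hLsplit]
  have : ∀ A B C D : ℝ, A + B - (C + D) = (A - C) + B + (-D) := by intros; ring
  rw [this]
  calc |(∑ k ∈ range (K+1), ((N n).choose k : ℝ) * q n ^ k * (1 - q n)^(N n - k) * g k
        - ∑ k ∈ range (K+1), P k)
      + (∑ k ∈ Finset.Ico (K+1) (N n + 1), ((N n).choose k : ℝ) * q n ^ k * (1 - q n)^(N n - k) * g k)
      + (-(∑' j : ℕ, P (j + (K+1))))|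
      ≤ |∑ k ∈ range (K+1), ((N n).choose k : ℝ) * q n ^ k * (1 - q n)^(N n - k) * g k
          - ∑ k ∈ range (K+1), P k|
        + |∑ k ∈ Finset.Ico (K+1) (N n + 1), ((N n).choose k : ℝ) * q n ^ k * (1 - q n)^(N n - k) * g k|
        + |∑' j : ℕ, P (j + (K+1))| := by
        have := abs_add_le (((∑ k ∈ range (K+1), ((N n).choose k : ℝ) * q n ^ k * (1 - q n)^(N n - k) * g k)
            - ∑ k ∈ range (K+1), P k)
          + (∑ k ∈ Finset.Ico (K+1) (N n + 1), ((N n).choose k : ℝ) * q n ^ k * (1 - q n)^(N n - k) * g k))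
          (-(∑' j : ℕ, P (j + (K+1))))
        have h2 := abs_add_le ((∑ k ∈ range (K+1), ((N n).choose k : ℝ) * q n ^ k * (1 - q n)^(N n - k) * g k)
            - ∑ k ∈ range (K+1), P k)
          (∑ k ∈ Finset.Ico (K+1) (N n + 1), ((N n).choose k : ℝ) * q n ^ k * (1 - q n)^(N n - k) * g k)
        rw [abs_neg] at this
        linarith
    _ < ε/4 + (M * (μ+1) / ((K:ℝ)+1)) + ε/4 := by
        have := lt_of_le_of_lt htailP hK1
        have h2 := htailB
        linarith
    _ < ε := by linarith

lemma binom_total_one (N : ℕ) (a : ℝ) :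
    ∑ k ∈ range (N+1), (N.choose k : ℝ) * a^k * (1-a)^(N-k) = 1 := by
  rw [binom_total]; simp

lemma binom_mean_one (N : ℕ) (a : ℝ) :
    ∑ k ∈ range (N+1), (k : ℝ) * ((N.choose k : ℝ) * a^k * (1-a)^(N-k)) = N * a := by
  rw [binom_mean]; simp

lemma lower_tail (N : ℕ) {u δ0 : ℝ} (h0 : 0 ≤ u) (h1 : u ≤ 1) (hδ : 0 < δ0) :
    ∑ r ∈ range (N+1), (if (N:ℝ)*δ0 < (N:ℝ)-(r:ℝ) then 1 else 0) *
        ((N.choose r : ℝ) * u^r * (1-u)^(N-r)) ≤ (1-u)/δ0 := by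
  rcases Nat.eq_zero_or_pos N with hN | hN
  · subst hN
    rw [Finset.sum_range_one, if_neg (by norm_num), zero_mul]
    exact div_nonneg (by linarith) hδ.le
  · have hNpos : (0:ℝ) < (N:ℝ) := by exact_mod_cast hN
    have step1 : ∑ r ∈ range (N+1), (if (N:ℝ)*δ0 < (N:ℝ)-(r:ℝ) then 1 else 0) *
        ((N.choose r : ℝ) * u^r * (1-u)^(N-r))
        ≤ ∑ r ∈ range (N+1), (((N:ℝ)-(r:ℝ))/((N:ℝ)*δ0)) *
            ((N.choose r : ℝ) * u^r * (1-u)^(N-r)) := by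
      refine Finset.sum_le_sum fun r hr => ?_
      rw [Finset.mem_range, Nat.lt_succ] at hr
      have hrN : (r:ℝ) ≤ (N:ℝ) := by exact_mod_cast hr
      have hpn := pmf_nonneg N r h0 h1
      split_ifs with h
      · have : (1:ℝ) ≤ ((N:ℝ)-(r:ℝ))/((N:ℝ)*δ0) := by
          rw [le_div_iff₀ (by positivity)]
          linarith
        nlinarith
      · have : 0 ≤ (((N:ℝ)-(r:ℝ))/((N:ℝ)*δ0)) := by
          apply div_nonneg (by linarith) (by positivity)
        nlinarith
    have step2 : ∑ r ∈ range (N+1), (((N:ℝ)-(r:ℝ))/((N:ℝ)*δ0)) *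
            ((N.choose r : ℝ) * u^r * (1-u)^(N-r)) = (1-u)/δ0 := by
      have expand : ∀ r ∈ range (N+1), (((N:ℝ)-(r:ℝ))/((N:ℝ)*δ0)) *
            ((N.choose r : ℝ) * u^r * (1-u)^(N-r))
          = (1/((N:ℝ)*δ0)) * ((N:ℝ) * ((N.choose r : ℝ) * u^r * (1-u)^(N-r)))
            - (1/((N:ℝ)*δ0)) * ((r:ℝ) * ((N.choose r : ℝ) * u^r * (1-u)^(N-r))) := by
        intro r _; ring
      rw [Finset.sum_congr rfl expand, Finset.sum_sub_distrib, ← Finset.mul_sum, ← Finset.mul_sum,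
        ← Finset.mul_sum, binom_total_one, binom_mean_one]
      field_simp
    linarith

lemma ST_bound (m : ℕ) (hm : 1 ≤ m) (f : ℝ → ℝ) (M : ℝ)
    (hM : ∀ t ∈ Set.Ici (0:ℝ), |f t| ≤ M) (x : ℝ) (hx : 0 ≤ x)
    (ε3 δ0 : ℝ) (hε3 : 0 < ε3) (hδ0 : 0 < δ0) (K0 : ℕ)
    (hfc : ∀ a b : ℝ, a ∈ Set.Icc 0 ((K0:ℝ)+x+1) → b ∈ Set.Icc 0 ((K0:ℝ)+x+1) →
      |a - b| ≤ δ0 * x → |f a - f b| ≤ ε3)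
    (N : ℕ) (hN : 1 ≤ N) (u p : ℝ)
    (hu0 : 0 ≤ u) (hu1 : u ≤ 1) (hp0 : 0 ≤ p) (hp1 : p ≤ 1)
    (hNp : (N:ℝ) * p = (m:ℝ) * x) :
    |(∑ r ∈ range (N+1), (N.choose r : ℝ) * u^r * (1-u)^(N-r) *
        ∑ k ∈ range (r+1), (r.choose k : ℝ) * p^k * (1-p)^(r-k) *
          f ((k:ℝ)/(m:ℝ) + (1 - (r:ℝ)/(N:ℝ)) * x))
      - ∑ r ∈ range (N+1), (N.choose r : ℝ) * u^r * (1-u)^(N-r) *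
        ∑ k ∈ range (r+1), (r.choose k : ℝ) * p^k * (1-p)^(r-k) * f ((k:ℝ)/(m:ℝ))|
      ≤ ε3 + 2*M*(1-u)/δ0 + 2*M*((m:ℝ)*x)/((K0:ℝ)+1) := by
  have hM0 : 0 ≤ M := le_trans (abs_nonneg _) (hM 0 Set.self_mem_Ici)
  have hNpos : (0:ℝ) < (N:ℝ) := by exact_mod_cast hN
  set b : ℕ → ℝ := fun r => (N.choose r : ℝ) * u^r * (1-u)^(N-r) with hb
  set c : ℕ → ℕ → ℝ := fun r k => (r.choose k : ℝ) * p^k * (1-p)^(r-k) with hc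
  set B : ℕ → ℕ → ℝ := fun r k => ε3 + (if (N:ℝ)*δ0 < (N:ℝ)-(r:ℝ) then 2*M else 0)
    + (if K0 < k then 2*M else 0) with hB
  -- termwise bound on |Δ|
  have habsD : ∀ r ∈ range (N+1), ∀ k ∈ range (r+1),
      |f ((k:ℝ)/(m:ℝ) + (1 - (r:ℝ)/(N:ℝ)) * x) - f ((k:ℝ)/(m:ℝ))| ≤ B r k := by
    intro r hr k hk
    rw [Finset.mem_range, Nat.lt_succ] at hr hk
    have hrN : (r:ℝ) ≤ (N:ℝ) := by exact_mod_cast hr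
    have hkm0 : (0:ℝ) ≤ (k:ℝ)/(m:ℝ) := by positivity
    have hθ : 0 ≤ 1 - (r:ℝ)/(N:ℝ) := by
      rw [sub_nonneg, div_le_one hNpos]; exact hrN
    have hθ1 : 1 - (r:ℝ)/(N:ℝ) ≤ 1 := by
      have : 0 ≤ (r:ℝ)/(N:ℝ) := by positivity
      linarith
    have ha1 : (0:ℝ) ≤ (k:ℝ)/(m:ℝ) + (1 - (r:ℝ)/(N:ℝ)) * x := by
      have : 0 ≤ (1 - (r:ℝ)/(N:ℝ)) * x := mul_nonneg hθ hx
      linarith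
    have h2M : |f ((k:ℝ)/(m:ℝ) + (1 - (r:ℝ)/(N:ℝ)) * x) - f ((k:ℝ)/(m:ℝ))| ≤ 2*M := by
      have h1 := hM _ ha1
      have h2 := hM _ hkm0
      calc |f ((k:ℝ)/(m:ℝ) + (1 - (r:ℝ)/(N:ℝ)) * x) - f ((k:ℝ)/(m:ℝ))|
          ≤ |f ((k:ℝ)/(m:ℝ) + (1 - (r:ℝ)/(N:ℝ)) * x)| + |f ((k:ℝ)/(m:ℝ))| := abs_sub _ _
        _ ≤ 2*M := by linarith
    by_cases h1 : (N:ℝ)*δ0 < (N:ℝ)-(r:ℝ)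
    · have : B r k = ε3 + 2*M + (if K0 < k then 2*M else 0) := by rw [hB]; simp [h1]
      rw [this]
      have : (0:ℝ) ≤ (if K0 < k then 2*M else 0) := by split_ifs <;> linarith
      linarith
    · by_cases h2 : K0 < k
      · have : B r k = ε3 + (0:ℝ) + 2*M := by rw [hB]; simp [h1, h2]
        rw [this]; linarith
      · -- both small: use uniform continuity
        push_neg at h1 h2
        have hkK : (k:ℝ) ≤ (K0:ℝ) := by exact_mod_cast h2
        have hm1 : (1:ℝ) ≤ (m:ℝ) := by exact_mod_cast hm
        have hkm_le : (k:ℝ)/(m:ℝ) ≤ (k:ℝ) := by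
          apply div_le_self (Nat.cast_nonneg k) hm1
        have hmem2 : (k:ℝ)/(m:ℝ) ∈ Set.Icc (0:ℝ) ((K0:ℝ)+x+1) := by
          constructor
          · exact hkm0
          · linarith
        have hθδ : (1 - (r:ℝ)/(N:ℝ)) ≤ δ0 := by
          have he : 1 - (r:ℝ)/(N:ℝ) = ((N:ℝ)-(r:ℝ))/(N:ℝ) := by field_simp
          rw [he, div_le_iff₀ hNpos]
          nlinarith [h1]
        have hmem1 : (k:ℝ)/(m:ℝ) + (1 - (r:ℝ)/(N:ℝ)) * x ∈ Set.Icc (0:ℝ) ((K0:ℝ)+x+1) := by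
          constructor
          · exact ha1
          · have : (1 - (r:ℝ)/(N:ℝ)) * x ≤ 1 * x := mul_le_mul_of_nonneg_right hθ1 hx
            linarith
        have hdist : |((k:ℝ)/(m:ℝ) + (1 - (r:ℝ)/(N:ℝ)) * x) - (k:ℝ)/(m:ℝ)| ≤ δ0 * x := by
          rw [add_sub_cancel_left, abs_of_nonneg (mul_nonneg hθ hx)]
          exact mul_le_mul_of_nonneg_right hθδ hx
        have := hfc _ _ hmem1 hmem2 hdist
        have hB' : B r k = ε3 + 0 + 0 := by rw [hB]; simp [h1.not_gt, h2.not_gt]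
        rw [hB']
        linarith [this]
  -- difference rewriting
  have hbnn : ∀ r, 0 ≤ b r := fun r => pmf_nonneg N r hu0 hu1
  have hcnn : ∀ r k, 0 ≤ c r k := fun r k => pmf_nonneg r k hp0 hp1
  have hdiff : (∑ r ∈ range (N+1), b r *
        ∑ k ∈ range (r+1), c r k * f ((k:ℝ)/(m:ℝ) + (1 - (r:ℝ)/(N:ℝ)) * x))
      - ∑ r ∈ range (N+1), b r * ∑ k ∈ range (r+1), c r k * f ((k:ℝ)/(m:ℝ))
      = ∑ r ∈ range (N+1), b r * ∑ k ∈ range (r+1), c r k *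
          (f ((k:ℝ)/(m:ℝ) + (1 - (r:ℝ)/(N:ℝ)) * x) - f ((k:ℝ)/(m:ℝ))) := by
    rw [← Finset.sum_sub_distrib]
    refine Finset.sum_congr rfl fun r _ => ?_
    rw [← mul_sub, ← Finset.sum_sub_distrib]
    congr 1
    refine Finset.sum_congr rfl fun k _ => ?_
    ring
  -- per-r bound on ∑ c * B
  have hEr : ∀ r ∈ range (N+1), ∑ k ∈ range (r+1), c r k * B r k
      ≤ ε3 + (if (N:ℝ)*δ0 < (N:ℝ)-(r:ℝ) then 2*M else 0) + 2*M*((r:ℝ)*p/((K0:ℝ)+1)) := by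
    intro r _
    have hsplit : ∑ k ∈ range (r+1), c r k * B r k
        = (ε3 + (if (N:ℝ)*δ0 < (N:ℝ)-(r:ℝ) then 2*M else 0)) * (∑ k ∈ range (r+1), c r k)
          + ∑ k ∈ range (r+1), (if K0 < k then 2*M else 0) * c r k := by
      rw [Finset.mul_sum, ← Finset.sum_add_distrib]
      refine Finset.sum_congr rfl fun k _ => ?_
      rw [hB]
      ring
    have hctot : (∑ k ∈ range (r+1), c r k) = 1 := by
      rw [hc]; exact binom_total_one r p
    have htail : ∑ k ∈ range (r+1), (if K0 < k then 2*M else 0) * c r k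
        ≤ 2*M*((r:ℝ)*p/((K0:ℝ)+1)) := by
      have he : ∑ k ∈ range (r+1), (if K0 < k then 2*M else 0) * c r k
          = 2*M * ∑ k ∈ Finset.Ico (K0+1) (r+1), c r k := by
        rw [Finset.mul_sum]
        rw [show ∑ k ∈ range (r+1), (if K0 < k then 2*M else 0) * c r k
            = ∑ k ∈ (range (r+1)).filter (fun k => K0 < k), 2*M* c r k by
          rw [Finset.sum_filter]
          refine Finset.sum_congr rfl fun k _ => ?_
          split_ifs <;> ring]
        congr 1
        ext k
        simp only [Finset.mem_filter, Finset.mem_range, Finset.mem_Ico]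
        omega
      rw [he]
      have := markov_tail r K0 hp0 hp1
      have h2 : ∑ k ∈ Finset.Ico (K0+1) (r+1), c r k ≤ (r:ℝ)*p/((K0:ℝ)+1) := by
        rw [hc]; exact_mod_cast this
      nlinarith
    rw [hsplit, hctot, mul_one]
    linarith
  -- main chain
  have hchain : |(∑ r ∈ range (N+1), b r *
        ∑ k ∈ range (r+1), c r k * f ((k:ℝ)/(m:ℝ) + (1 - (r:ℝ)/(N:ℝ)) * x))
      - ∑ r ∈ range (N+1), b r * ∑ k ∈ range (r+1), c r k * f ((k:ℝ)/(m:ℝ))|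
      ≤ ∑ r ∈ range (N+1), b r * (ε3 + (if (N:ℝ)*δ0 < (N:ℝ)-(r:ℝ) then 2*M else 0)
          + 2*M*((r:ℝ)*p/((K0:ℝ)+1))) := by
    rw [hdiff]
    calc |∑ r ∈ range (N+1), b r * ∑ k ∈ range (r+1), c r k *
          (f ((k:ℝ)/(m:ℝ) + (1 - (r:ℝ)/(N:ℝ)) * x) - f ((k:ℝ)/(m:ℝ)))|
        ≤ ∑ r ∈ range (N+1), |b r * ∑ k ∈ range (r+1), c r k *
            (f ((k:ℝ)/(m:ℝ) + (1 - (r:ℝ)/(N:ℝ)) * x) - f ((k:ℝ)/(m:ℝ)))| :=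
          Finset.abs_sum_le_sum_abs _ _
      _ ≤ ∑ r ∈ range (N+1), b r * (ε3 + (if (N:ℝ)*δ0 < (N:ℝ)-(r:ℝ) then 2*M else 0)
            + 2*M*((r:ℝ)*p/((K0:ℝ)+1))) := by
          refine Finset.sum_le_sum fun r hr => ?_
          rw [abs_mul, abs_of_nonneg (hbnn r)]
          refine mul_le_mul_of_nonneg_left ?_ (hbnn r)
          calc |∑ k ∈ range (r+1), c r k *
                (f ((k:ℝ)/(m:ℝ) + (1 - (r:ℝ)/(N:ℝ)) * x) - f ((k:ℝ)/(m:ℝ)))|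
              ≤ ∑ k ∈ range (r+1), |c r k *
                  (f ((k:ℝ)/(m:ℝ) + (1 - (r:ℝ)/(N:ℝ)) * x) - f ((k:ℝ)/(m:ℝ)))| :=
                Finset.abs_sum_le_sum_abs _ _
            _ ≤ ∑ k ∈ range (r+1), c r k * B r k := by
                refine Finset.sum_le_sum fun k hk => ?_
                rw [abs_mul, abs_of_nonneg (hcnn r k)]
                exact mul_le_mul_of_nonneg_left (habsD r hr k hk) (hcnn r k)
            _ ≤ ε3 + (if (N:ℝ)*δ0 < (N:ℝ)-(r:ℝ) then 2*M else 0)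
                + 2*M*((r:ℝ)*p/((K0:ℝ)+1)) := hEr r hr
  -- final aggregation
  have hexpand : ∑ r ∈ range (N+1), b r * (ε3 + (if (N:ℝ)*δ0 < (N:ℝ)-(r:ℝ) then 2*M else 0)
        + 2*M*((r:ℝ)*p/((K0:ℝ)+1)))
      = ε3 * (∑ r ∈ range (N+1), b r)
        + 2*M * (∑ r ∈ range (N+1), (if (N:ℝ)*δ0 < (N:ℝ)-(r:ℝ) then 1 else 0) * b r)
        + (2*M*p/((K0:ℝ)+1)) * (∑ r ∈ range (N+1), (r:ℝ) * b r) := by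
    rw [Finset.mul_sum, Finset.mul_sum, Finset.mul_sum, ← Finset.sum_add_distrib,
      ← Finset.sum_add_distrib]
    refine Finset.sum_congr rfl fun r _ => ?_
    split_ifs <;> ring
  have hbtot : (∑ r ∈ range (N+1), b r) = 1 := by rw [hb]; exact binom_total_one N u
  have hbmean : (∑ r ∈ range (N+1), (r:ℝ) * b r) = (N:ℝ) * u := by
    rw [hb]; exact binom_mean_one N u
  have hltail : ∑ r ∈ range (N+1), (if (N:ℝ)*δ0 < (N:ℝ)-(r:ℝ) then 1 else 0) * b r
      ≤ (1-u)/δ0 := by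
    rw [hb]; exact lower_tail N hu0 hu1 hδ0
  have hlast : (2*M*p/((K0:ℝ)+1)) * ((N:ℝ) * u) ≤ 2*M*((m:ℝ)*x)/((K0:ℝ)+1) := by
    have h1 : (2*M*p/((K0:ℝ)+1)) * ((N:ℝ) * u) = 2*M*(((N:ℝ)*p) * u)/((K0:ℝ)+1) := by ring
    rw [h1, hNp]
    have hmx : 0 ≤ (m:ℝ)*x := by positivity
    have : ((m:ℝ)*x) * u ≤ (m:ℝ)*x := by nlinarith
    gcongr
  calc |(∑ r ∈ range (N+1), b r *
        ∑ k ∈ range (r+1), c r k * f ((k:ℝ)/(m:ℝ) + (1 - (r:ℝ)/(N:ℝ)) * x))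
      - ∑ r ∈ range (N+1), b r * ∑ k ∈ range (r+1), c r k * f ((k:ℝ)/(m:ℝ))|
      ≤ ε3 * (∑ r ∈ range (N+1), b r)
        + 2*M * (∑ r ∈ range (N+1), (if (N:ℝ)*δ0 < (N:ℝ)-(r:ℝ) then 1 else 0) * b r)
        + (2*M*p/((K0:ℝ)+1)) * (∑ r ∈ range (N+1), (r:ℝ) * b r) := by
        rw [← hexpand]; exact hchain
    _ ≤ ε3 + 2*M*(1-u)/δ0 + 2*M*((m:ℝ)*x)/((K0:ℝ)+1) := by
        rw [hbtot, hbmean, mul_one]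
        have h2 : 2*M * (∑ r ∈ range (N+1), (if (N:ℝ)*δ0 < (N:ℝ)-(r:ℝ) then 1 else 0) * b r)
            ≤ 2*M*((1-u)/δ0) := by
          refine mul_le_mul_of_nonneg_left hltail (by linarith)
        have h3 := hlast
        have : 2*M*((1-u)/δ0) = 2*M*(1-u)/δ0 := by ring
        linarith [this]


/-- **Convergence of rescaled Lototsky–Schnabl operators to the Szász–Mirakjan operator:**
for continuous `lam : [0,1] → [0,1]` with `lam 0 = 1`, `m ≥ 1`, `x ≥ 0` and bounded
continuous `f : [0,∞) → ℝ`, `lim_{n→∞} A_{mn,lam}(f(nt); x/n) = B_m^{[0]}(f(t); x)`. -/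
theorem stmt_12 (lam : ℝ → ℝ) (hlamc : ContinuousOn lam (Set.Icc 0 1))
    (hlam01 : ∀ t ∈ Set.Icc (0 : ℝ) 1, lam t ∈ Set.Icc (0 : ℝ) 1) (hlam0 : lam 0 = 1)
    (m : ℕ) (hm : 1 ≤ m) (x : ℝ) (hx : 0 ≤ x)
    (f : ℝ → ℝ) (hf : ContinuousOn f (Set.Ici 0))
    (hfb : ∃ M : ℝ, ∀ t ∈ Set.Ici (0 : ℝ), |f t| ≤ M) :
    Tendsto (fun n : ℕ =>
        ∑ r ∈ Finset.range (m * n + 1),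
          ((m * n).choose r : ℝ) * lam (x / n) ^ r * (1 - lam (x / n)) ^ (m * n - r) *
            ∑ k ∈ Finset.range (r + 1),
              (r.choose k : ℝ) * (x / n) ^ k * (1 - x / n) ^ (r - k) *
                f (k / m + (1 - (r : ℝ) / (m * n)) * x))
      atTop
      (𝓝 (∑' j : ℕ, Real.exp (-(m * x)) * (m * x) ^ j / (j.factorial : ℝ) * f (j / m))) := by
  obtain ⟨M, hM⟩ := hfb
  have hM0 : 0 ≤ M := le_trans (abs_nonneg _) (hM 0 Set.self_mem_Ici)
  have hμ0 : (0:ℝ) ≤ (m:ℝ) * x := by positivity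
  have hN' : Tendsto (fun n : ℕ => m * n) atTop atTop :=
    tendsto_atTop_mono (fun n => Nat.le_mul_of_pos_left n hm) tendsto_id
  have hxn0 : Tendsto (fun n : ℕ => x / (n:ℝ)) atTop (𝓝 0) :=
    tendsto_const_div_atTop_nhds_zero_nat x
  have hxn_mem : ∀ᶠ n : ℕ in atTop, x / (n:ℝ) ∈ Set.Icc (0:ℝ) 1 := by
    filter_upwards [eventually_ge_atTop (max 1 ⌈x⌉₊)] with n hn
    have h1 : 1 ≤ n := le_trans (le_max_left _ _) hn
    have h2 : ⌈x⌉₊ ≤ n := le_trans (le_max_right _ _) hn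
    have hn1 : (1:ℝ) ≤ (n:ℝ) := by exact_mod_cast h1
    have hxn : x ≤ (n:ℝ) := le_trans (Nat.le_ceil x) (by exact_mod_cast h2)
    exact ⟨div_nonneg hx (by linarith), by rw [div_le_one (by linarith)]; exact hxn⟩
  have hlam_t : Tendsto (fun n : ℕ => lam (x / (n:ℝ))) atTop (𝓝 1) := by
    have hc : ContinuousWithinAt lam (Set.Icc 0 1) 0 :=
      hlamc 0 ⟨le_rfl, zero_le_one⟩
    have hto : Tendsto (fun n : ℕ => x / (n:ℝ)) atTop (𝓝[Set.Icc (0:ℝ) 1] 0) :=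
      tendsto_nhdsWithin_iff.2 ⟨hxn0, hxn_mem⟩
    have := hc.tendsto.comp hto
    rwa [hlam0] at this
  have hlam_mem : ∀ᶠ n : ℕ in atTop, lam (x / (n:ℝ)) ∈ Set.Icc (0:ℝ) 1 :=
    hxn_mem.mono fun n h => hlam01 _ h
  have hq01 : ∀ᶠ n : ℕ in atTop, lam (x / (n:ℝ)) * (x / (n:ℝ)) ∈ Set.Icc (0:ℝ) 1 := by
    filter_upwards [hxn_mem, hlam_mem] with n h1 h2
    constructor
    · exact mul_nonneg h2.1 h1.1
    · calc lam (x / (n:ℝ)) * (x / (n:ℝ)) ≤ 1 * 1 := by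
            apply mul_le_mul h2.2 h1.2 h1.1 zero_le_one
        _ = 1 := by norm_num
  have hNq : Tendsto (fun n : ℕ => ((m*n : ℕ):ℝ) * (lam (x / (n:ℝ)) * (x / (n:ℝ)))) atTop
      (𝓝 ((m:ℝ) * x)) := by
    have h1 : Tendsto (fun n : ℕ => ((m:ℝ) * x) * lam (x / (n:ℝ))) atTop
        (𝓝 (((m:ℝ) * x) * 1)) := hlam_t.const_mul _
    rw [mul_one] at h1
    refine h1.congr' ?_
    filter_upwards [eventually_ge_atTop 1] with n hn
    have hn0 : (n:ℝ) ≠ 0 := Nat.cast_ne_zero.2 (by omega)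
    push_cast
    field_simp
  have hT := binom_to_poisson ((m:ℝ)*x) hμ0 M (fun k : ℕ => f ((k:ℝ)/(m:ℝ)))
    (fun k => hM _ (Set.mem_Ici.2 (by positivity))) (fun n => m*n)
    (fun n => lam (x / (n:ℝ)) * (x / (n:ℝ))) hN' hq01 hNq
  have hTT : ∀ n : ℕ, (∑ k ∈ range (m*n+1), ((m*n).choose k : ℝ)
        * (lam (x / (n:ℝ)) * (x / (n:ℝ)))^k
        * (1 - lam (x / (n:ℝ)) * (x / (n:ℝ)))^(m*n-k) * f ((k:ℝ)/(m:ℝ)))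
      = ∑ r ∈ range (m*n+1), ((m*n).choose r : ℝ) * (lam (x / (n:ℝ)))^r
          * (1 - lam (x / (n:ℝ)))^(m*n-r) *
          ∑ k ∈ range (r+1), (r.choose k : ℝ) * (x / (n:ℝ))^k * (1 - x / (n:ℝ))^(r-k)
            * f ((k:ℝ)/(m:ℝ)) :=
    fun n => (thinning (m*n) (lam (x / (n:ℝ))) (x / (n:ℝ)) (fun k => f ((k:ℝ)/(m:ℝ)))).symm
  have hT2 : Tendsto (fun n : ℕ => ∑ r ∈ range (m*n+1), ((m*n).choose r : ℝ)
        * (lam (x / (n:ℝ)))^r * (1 - lam (x / (n:ℝ)))^(m*n-r) *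
        ∑ k ∈ range (r+1), (r.choose k : ℝ) * (x / (n:ℝ))^k * (1 - x / (n:ℝ))^(r-k)
          * f ((k:ℝ)/(m:ℝ))) atTop
      (𝓝 (∑' k : ℕ, Real.exp (-((m:ℝ)*x)) * ((m:ℝ)*x)^k / (k.factorial : ℝ) * f ((k:ℝ)/(m:ℝ)))) :=
    hT.congr hTT
  -- difference tends to zero
  have hD : Tendsto (fun n : ℕ =>
      (∑ r ∈ range (m*n+1), ((m*n).choose r : ℝ) * (lam (x / (n:ℝ)))^r
          * (1 - lam (x / (n:ℝ)))^(m*n-r) *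
          ∑ k ∈ range (r+1), (r.choose k : ℝ) * (x / (n:ℝ))^k * (1 - x / (n:ℝ))^(r-k)
            * f ((k:ℝ)/(m:ℝ) + (1 - (r:ℝ) / ((m:ℝ) * (n:ℝ))) * x))
      - ∑ r ∈ range (m*n+1), ((m*n).choose r : ℝ) * (lam (x / (n:ℝ)))^r
          * (1 - lam (x / (n:ℝ)))^(m*n-r) *
          ∑ k ∈ range (r+1), (r.choose k : ℝ) * (x / (n:ℝ))^k * (1 - x / (n:ℝ))^(r-k)
            * f ((k:ℝ)/(m:ℝ))) atTop (𝓝 0) := by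
    rw [NormedAddCommGroup.tendsto_nhds_zero]
    intro ε hε
    obtain ⟨K0, hK0⟩ : ∃ K0 : ℕ, 2*M*((m:ℝ)*x)/((K0:ℝ)+1) < ε/3 := by
      have t2 : Tendsto (fun K : ℕ => 2*M*((m:ℝ)*x)/((K:ℝ)+1)) atTop (𝓝 0) := by
        have h := tendsto_one_div_add_atTop_nhds_zero_nat.const_mul (2*M*((m:ℝ)*x))
        rw [mul_zero] at h
        refine h.congr fun K => ?_
        rw [mul_one_div]
      exact (t2.eventually (gt_mem_nhds (by linarith))).exists
    have hfu : UniformContinuousOn f (Set.Icc 0 ((K0:ℝ) + x + 1)) :=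
      isCompact_Icc.uniformContinuousOn_of_continuous (hf.mono (fun t ht => ht.1))
    obtain ⟨δ, hδpos, hδ⟩ := Metric.uniformContinuousOn_iff.1 hfu (ε/6) (by linarith)
    have hδ0pos : 0 < δ/(2*(x+1)) := div_pos hδpos (by linarith)
    have hfc : ∀ a b : ℝ, a ∈ Set.Icc 0 ((K0:ℝ) + x + 1) → b ∈ Set.Icc 0 ((K0:ℝ) + x + 1)
        → |a - b| ≤ (δ/(2*(x+1))) * x → |f a - f b| ≤ ε/6 := by
      intro a b ha hb hab
      have hlt : (δ/(2*(x+1))) * x < δ := by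
        rw [div_mul_eq_mul_div, div_lt_iff₀ (by linarith)]
        nlinarith
      have := hδ a ha b hb (by rw [Real.dist_eq]; linarith)
      rw [Real.dist_eq] at this
      linarith
    have hlam3 : ∀ᶠ n : ℕ in atTop, 2*M*(1 - lam (x / (n:ℝ)))/(δ/(2*(x+1))) < ε/3 := by
      have hcont : Tendsto (fun n : ℕ => 2*M*(1 - lam (x / (n:ℝ)))/(δ/(2*(x+1)))) atTop
          (𝓝 (2*M*(1 - 1)/(δ/(2*(x+1))))) :=
        Tendsto.div_const ((tendsto_const_nhds.sub hlam_t).const_mul (2*M)) _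
      rw [show 2*M*((1:ℝ) - 1)/(δ/(2*(x+1))) = 0 by ring] at hcont
      exact hcont.eventually (gt_mem_nhds (by linarith))
    filter_upwards [hxn_mem, hlam_mem, hlam3, eventually_ge_atTop 1] with n h1 h2 h3 h4
    have hmn1 : 1 ≤ m * n := Nat.one_le_iff_ne_zero.2 (by positivity)
    have hn0 : (n:ℝ) ≠ 0 := Nat.cast_ne_zero.2 (by omega)
    have hNp : ((m*n : ℕ):ℝ) * (x / (n:ℝ)) = (m:ℝ) * x := by
      push_cast
      field_simp
    have hb := ST_bound m hm f M hM x hx (ε/6) (δ/(2*(x+1))) (by linarith) hδ0pos K0 hfc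
      (m*n) hmn1 (lam (x / (n:ℝ))) (x / (n:ℝ)) h2.1 h2.2 h1.1 h1.2 hNp
    have hcast : ((m*n : ℕ):ℝ) = (m:ℝ)*(n:ℝ) := by push_cast; ring
    rw [hcast] at hb
    rw [Real.norm_eq_abs]
    calc |(∑ r ∈ range (m*n+1), ((m*n).choose r : ℝ) * (lam (x / (n:ℝ)))^r
          * (1 - lam (x / (n:ℝ)))^(m*n-r) *
          ∑ k ∈ range (r+1), (r.choose k : ℝ) * (x / (n:ℝ))^k * (1 - x / (n:ℝ))^(r-k)
            * f ((k:ℝ)/(m:ℝ) + (1 - (r:ℝ) / ((m:ℝ) * (n:ℝ))) * x))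
      - ∑ r ∈ range (m*n+1), ((m*n).choose r : ℝ) * (lam (x / (n:ℝ)))^r
          * (1 - lam (x / (n:ℝ)))^(m*n-r) *
          ∑ k ∈ range (r+1), (r.choose k : ℝ) * (x / (n:ℝ))^k * (1 - x / (n:ℝ))^(r-k)
            * f ((k:ℝ)/(m:ℝ))|
        ≤ ε/6 + 2*M*(1 - lam (x / (n:ℝ)))/(δ/(2*(x+1))) + 2*M*((m:ℝ)*x)/((K0:ℝ)+1) := hb
      _ < ε := by linarith
  have hsum := hT2.add hD
  rw [add_zero] at hsum
  refine hsum.congr fun n => ?_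
  ring
end

section
/- Let (L_n)_{n≥1} and (T_m)_{m≥1} be families of maps sending bounded continuous functions f : [0,∞) → ℝ to real-valued functions on [0,∞). Suppose that for every m ≥ 1, every x ≥ 0, and every bounded continuous f : [0,∞) → ℝ, lim_{n→∞} L_{mn}( t ↦ f(nt) )(x/n) = T_m(f)(x). Then for all m ≥ 1, ν ≥ 1 (m, ν ∈ ℕ), x ≥ 0, and bounded continuous f : [0,∞) → ℝ, T_{mν}( t ↦ f(νt) )(x/ν) = T_m(f)(x). -/
open Filter Topology

/-- **Functional equation for limit operators.** If
`lim_{n→∞} L_{mn}(f(nt); x/n) = T_m(f(t); x)` for all `m ≥ 1`, `x ≥ 0` and bounded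
continuous `f : [0,∞) → ℝ`, then `T_{mν}(f(νt); x/ν) = T_m(f(t); x)` for all
`m, ν ≥ 1`, `x ≥ 0` and bounded continuous `f`. -/
theorem stmt_16 (L T : ℕ → (ℝ → ℝ) → ℝ → ℝ)
    (h : ∀ m : ℕ, 1 ≤ m → ∀ x : ℝ, 0 ≤ x → ∀ f : ℝ → ℝ,
      ContinuousOn f (Set.Ici 0) → (∃ M : ℝ, ∀ t ∈ Set.Ici (0 : ℝ), |f t| ≤ M) →
      Tendsto (fun n : ℕ => L (m * n) (fun t => f (n * t)) (x / n)) atTop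
        (𝓝 (T m f x))) :
    ∀ m ν : ℕ, 1 ≤ m → 1 ≤ ν → ∀ x : ℝ, 0 ≤ x → ∀ f : ℝ → ℝ,
      ContinuousOn f (Set.Ici 0) → (∃ M : ℝ, ∀ t ∈ Set.Ici (0 : ℝ), |f t| ≤ M) →
      T (m * ν) (fun t => f (ν * t)) (x / ν) = T m f x := by
  intro m ν hm hν x hx f hf hb
  have hν0 : (0 : ℝ) < (ν : ℝ) := by exact_mod_cast hν
  -- limit for the original family along the subsequence n = ν * k
  have h1 : Tendsto (fun n : ℕ => L (m * n) (fun t => f (n * t)) (x / n)) atTop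
      (𝓝 (T m f x)) := h m hm x hx f hf hb
  have hsub : Tendsto (fun k : ℕ => ν * k) atTop atTop :=
    tendsto_atTop_atTop_of_monotone (fun a b hab => Nat.mul_le_mul_left ν hab)
      (fun b => ⟨b, Nat.le_mul_of_pos_left b (by omega)⟩)
  have h1' : Tendsto (fun k : ℕ =>
      L (m * (ν * k)) (fun t => f ((ν * k : ℕ) * t)) (x / (ν * k : ℕ))) atTop
      (𝓝 (T m f x)) := h1.comp hsub
  -- limit for the scaled function g t = f (ν t)
  set g : ℝ → ℝ := fun t => f (ν * t) with hg
  have hgc : ContinuousOn g (Set.Ici 0) := by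
    apply hf.comp (continuous_const.mul continuous_id).continuousOn
    intro t ht
    exact mul_nonneg hν0.le ht
  have hgb : ∃ M : ℝ, ∀ t ∈ Set.Ici (0 : ℝ), |g t| ≤ M := by
    obtain ⟨M, hM⟩ := hb
    exact ⟨M, fun t ht => hM _ (mul_nonneg hν0.le ht)⟩
  have hxν : 0 ≤ x / ν := div_nonneg hx hν0.le
  have h2 : Tendsto (fun k : ℕ => L (m * ν * k) (fun t => g (k * t)) (x / ν / k)) atTop
      (𝓝 (T (m * ν) g (x / ν))) := h (m * ν) (Nat.one_le_iff_ne_zero.mpr (by positivity)) (x / ν) hxν g hgc hgb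
  -- the two sequences are equal
  have heq : (fun k : ℕ => L (m * ν * k) (fun t => g (k * t)) (x / ν / k)) =
      (fun k : ℕ => L (m * (ν * k)) (fun t => f ((ν * k : ℕ) * t)) (x / (ν * k : ℕ))) := by
    funext k
    congr 1
    · ring
    · funext t; simp only [hg]; push_cast; ring_nf
    · push_cast; rw [div_div]
  rw [heq] at h2
  exact tendsto_nhds_unique h2 h1'
end

section
/- Let 0 ≤ a_0 < a_1 < a_2 < ⋯ be a strictly increasing sequence of nonnegative reals, and for each m ∈ ℕ, m ≥ 1, and k ∈ ℕ let φ_{m,k} : [0,∞) → [0,∞) be nonnegative, bounded and continuous, with Σ_{k=0}^{∞} φ_{m,k}(x) < ∞ for every x ≥ 0. Define T_m(f;x) := Σ_{k=0}^{∞} φ_{m,k}(x) f(a_k/m) for bounded continuous f : [0,∞) → ℝ and x ≥ 0. Then the following three conditions are equivalent: (i) T_{mν}( f(νt); x/ν ) = T_m( f(t); x ) for all m, ν ∈ ℕ with m, ν ≥ 1, all x ≥ 0, and all bounded continuous f; (ii) φ_{mν,k}(x) = φ_{m,k}(νx) for all m, ν ∈ ℕ with m, ν ≥ 1, all k ∈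 ℕ, and all x ≥ 0; (iii) φ_{m,k}(x) = φ_{1,k}(mx) for all m ∈ ℕ with m ≥ 1, all k ∈ ℕ, and all x ≥ 0. -/
open Filter Topology

/-- A continuous bump: `1` at `c`, vanishing at distance `≥ δ`, with values in `[0,1]`. -/
lemma bump_exists (c δ : ℝ) (hδ : 0 < δ) :
    ∃ f : ℝ → ℝ, Continuous f ∧ (∀ t, 0 ≤ f t) ∧ (∀ t, f t ≤ 1) ∧ f c = 1 ∧
      ∀ t, δ ≤ |t - c| → f t = 0 := by
  refine ⟨fun t => max 0 (1 - |t - c| / δ), by fun_prop, fun t => le_max_left _ _,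
    fun t => ?_, by simp, fun t ht => ?_⟩
  · apply max_le (by norm_num)
    have : 0 ≤ |t - c| / δ := by positivity
    linarith
  · have h1 : 1 ≤ |t - c| / δ := (one_le_div hδ).2 ht
    have : 1 - |t - c| / δ ≤ 0 := by linarith
    simpa [max_eq_left this]

/-- **Characterization of discrete limit operators.** For
`T_m(f; x) = ∑_k φ_{m,k}(x) f(a_k/m)` with nonnegative, bounded, continuous, summable
coefficient functions `φ_{m,k}` and strictly increasing nonnegative nodes `a_k`, the
functional equation `T_{mν}(f(νt); x/ν) = T_m(f(t); x)` is equivalent to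
`φ_{mν,k}(x) = φ_{m,k}(νx)` and to `φ_{m,k}(x) = φ_{1,k}(mx)`. -/
theorem stmt_17 (a : ℕ → ℝ) (ha0 : 0 ≤ a 0) (hmono : StrictMono a)
    (φ : ℕ → ℕ → ℝ → ℝ)
    (hcont : ∀ m : ℕ, 1 ≤ m → ∀ k : ℕ, ContinuousOn (φ m k) (Set.Ici 0))
    (hnonneg : ∀ m : ℕ, 1 ≤ m → ∀ k : ℕ, ∀ x ∈ Set.Ici (0 : ℝ), 0 ≤ φ m k x)
    (hbdd : ∀ m : ℕ, 1 ≤ m → ∀ k : ℕ, ∃ M : ℝ, ∀ x ∈ Set.Ici (0 : ℝ), φ m k x ≤ M)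
    (hsum : ∀ m : ℕ, 1 ≤ m → ∀ x : ℝ, 0 ≤ x → Summable (fun k => φ m k x)) :
    List.TFAE
      [∀ m ν : ℕ, 1 ≤ m → 1 ≤ ν → ∀ x : ℝ, 0 ≤ x → ∀ f : ℝ → ℝ,
          ContinuousOn f (Set.Ici 0) → (∃ M : ℝ, ∀ t ∈ Set.Ici (0 : ℝ), |f t| ≤ M) →
          ∑' k : ℕ, φ (m * ν) k (x / ν) * f (ν * (a k / (m * ν))) =
            ∑' k : ℕ, φ m k x * f (a k / m),
        ∀ m ν : ℕ, 1 ≤ m → 1 ≤ ν → ∀ k : ℕ, ∀ x : ℝ, 0 ≤ x →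
          φ (m * ν) k x = φ m k (ν * x),
        ∀ m : ℕ, 1 ≤ m → ∀ k : ℕ, ∀ x : ℝ, 0 ≤ x →
          φ m k x = φ 1 k (m * x)] := by
  tfae_have 1 → 2 := by
    intro h1 m ν hm hν k x hx
    have hm0 : (0:ℝ) < m := by exact_mod_cast hm
    have hν0 : (0:ℝ) < ν := by exact_mod_cast hν
    -- separation of nodes a j / m
    set c : ℝ := a k / m with hc
    set δ' : ℝ := if k = 0 then a 1 - a 0 else min (a (k+1) - a k) (a k - a (k-1)) with hδ'
    have hδ'pos : 0 < δ' := by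
      rcases Nat.eq_zero_or_pos k with rfl | hk
      · rw [hδ', if_pos rfl]
        linarith [hmono (by norm_num : (0:ℕ) < 1)]
      · have hk1 : k - 1 < k := Nat.sub_lt hk one_pos
        simp only [hδ', if_neg hk.ne']
        exact lt_min (by linarith [hmono (Nat.lt_succ_self k)]) (by linarith [hmono hk1])
    set δ : ℝ := δ' / m with hδ
    have hδpos : 0 < δ := by positivity
    have hsep : ∀ j : ℕ, j ≠ k → δ ≤ |a j / m - c| := by
      intro j hj
      have key : δ' ≤ |a j - a k| := by
        rcases lt_or_gt_of_ne hj with h | h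
        · have hk : 0 < k := Nat.pos_of_ne_zero (by rintro rfl; omega)
          have h1 : a j ≤ a (k-1) := hmono.monotone (by omega)
          have h2 : a j < a k := hmono h
          rw [abs_of_neg (by linarith)]
          have : δ' ≤ a k - a (k-1) := by
            simp only [hδ', if_neg hk.ne']; exact min_le_right _ _
          linarith
        · have h1 : a (k+1) ≤ a j := hmono.monotone (by omega)
          have h2 : a k < a j := hmono h
          rw [abs_of_pos (by linarith)]
          have : δ' ≤ a (k+1) - a k := by
            rcases Nat.eq_zero_or_pos k with rfl | hk
            · simp [hδ']
            · simp only [hδ', if_neg hk.ne']; exact min_le_left _ _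
          linarith
      have : |a j / m - c| = |a j - a k| / m := by
        rw [hc, div_sub_div_same, abs_div, abs_of_pos hm0]
      rw [this, hδ]
      gcongr
    obtain ⟨f, hfc, hf0, hf1, hfone, hfzero⟩ := bump_exists c δ hδpos
    have hxν : 0 ≤ (ν:ℝ) * x := by positivity
    have key := h1 m ν hm hν ((ν:ℝ) * x) hxν f hfc.continuousOn
      ⟨1, fun t _ => abs_le.2 ⟨by linarith [hf0 t], hf1 t⟩⟩
    have harg : ∀ j : ℕ, (ν:ℝ) * (a j / ((m:ℝ) * ν)) = a j / m := by
      intro j; field_simp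
    have hdivν : (ν:ℝ) * x / ν = x := by field_simp
    rw [hdivν] at key
    have hL : ∑' j : ℕ, φ (m * ν) j x * f ((ν:ℝ) * (a j / ((m:ℝ) * ν))) = φ (m * ν) k x := by
      rw [tsum_eq_single k]
      · rw [harg k, hfone, mul_one]
      · intro j hj
        rw [harg j, hfzero _ (hsep j hj), mul_zero]
    have hR : ∑' j : ℕ, φ m j ((ν:ℝ) * x) * f (a j / m) = φ m k ((ν:ℝ) * x) := by
      rw [tsum_eq_single k]
      · rw [hfone, mul_one]
      · intro j hj
        rw [hfzero _ (hsep j hj), mul_zero]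
    rw [hL, hR] at key
    exact key
  tfae_have 2 → 3 := by
    intro h2 m hm k x hx
    have := h2 1 m le_rfl hm k x hx
    simpa using this
  tfae_have 3 → 1 := by
    intro h3 m ν hm hν x hx f hf hb
    have hm0 : (0:ℝ) < m := by exact_mod_cast hm
    have hν0 : (0:ℝ) < ν := by exact_mod_cast hν
    apply tsum_congr
    intro k
    have harg : (ν:ℝ) * (a k / ((m:ℝ) * ν)) = a k / m := by
      field_simp
    rw [harg]
    congr 1
    have e1 := h3 (m * ν) (le_trans hm (Nat.le_mul_of_pos_right m hν)) k (x / ν)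
      (by positivity)
    have e2 := h3 m hm k x hx
    rw [e1, e2]
    congr 1
    push_cast
    field_simp
  tfae_finish
end

section
/- Let K : [0,∞) × [0,∞) → [0,∞) be continuous and such that for each x ≥ 0 the function t ↦ K(t,x) is Lebesgue integrable on [0,∞), and define Z(f)(x) := ∫_0^∞ f(t) K(t,x) dt for bounded continuous f : [0,∞) → ℝ. Then the following are equivalent: (i) for every ν ∈ ℕ with ν ≥ 1, every x ≥ 0, and every bounded continuous f : [0,∞) → ℝ, Z( t ↦ f(t/ν) )(νx) = Z(f)(x); (ii) for every real ν > 0 and all t, x ≥ 0, K(νt, νx) = (1/ν) K(t,x). -/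
open Filter Topology MeasureTheory

lemma cov18 (F : ℝ → ℝ) {c : ℝ} (hc : 0 < c) :
    ∫ t in Set.Ici (0:ℝ), F t = c * ∫ s in Set.Ici (0:ℝ), F (c * s) := by
  rw [integral_Ici_eq_integral_Ioi, integral_Ici_eq_integral_Ioi,
    integral_comp_mul_left_Ioi F 0 hc, mul_zero, smul_eq_mul, ← mul_assoc,
    mul_inv_cancel₀ hc.ne', one_mul]

lemma intOn18 (g : ℝ → ℝ) (hg : IntegrableOn g (Set.Ici 0)) {c : ℝ} (hc : 0 < c) :
    IntegrableOn (fun s => g (c * s)) (Set.Ici 0) := by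
  rw [integrableOn_Ici_iff_integrableOn_Ioi] at hg ⊢
  rw [show (0:ℝ) = c * 0 by ring] at hg
  exact (integrableOn_Ioi_comp_mul_left_iff g 0 hc).2 hg

lemma sep_pos18 (g : ℝ → ℝ) (hgc : ContinuousOn g (Set.Ici 0))
    (hgi : IntegrableOn g (Set.Ici 0))
    (h : ∀ f : ℝ → ℝ, ContinuousOn f (Set.Ici 0) →
      (∃ M : ℝ, ∀ t ∈ Set.Ici (0:ℝ), |f t| ≤ M) →
      ∫ t in Set.Ici (0:ℝ), f t * g t = 0)
    {t₀ : ℝ} (ht₀ : 0 ≤ t₀) : ¬ (0 < g t₀) := by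
  intro hpos
  -- continuity: find δ > 0 with g t > g t₀ / 2 on Ici 0 ∩ ball
  have hcw : ContinuousWithinAt g (Set.Ici 0) t₀ := hgc t₀ ht₀
  rw [Metric.continuousWithinAt_iff] at hcw
  obtain ⟨δ, hδ, hball⟩ := hcw (g t₀ / 2) (by linarith)
  set f : ℝ → ℝ := fun t => max 0 (1 - |t - t₀| / δ) with hf
  have hfc : Continuous f :=
    continuous_const.max (continuous_const.sub
      (((continuous_id.sub continuous_const).abs).div_const δ))
  have hf01 : ∀ t, 0 ≤ f t ∧ f t ≤ 1 := by
    intro t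
    refine ⟨le_max_left _ _, ?_⟩
    have : 0 ≤ |t - t₀| / δ := div_nonneg (abs_nonneg _) hδ.le
    simp only [hf, max_le_iff]; constructor <;> linarith
  have hglb : ∀ t ∈ Set.Ici (0:ℝ), |t - t₀| < δ → g t₀ / 2 < g t := by
    intro t ht hlt
    have := hball ht (by simpa [Real.dist_eq] using hlt)
    rw [Real.dist_eq] at this
    cases abs_lt.1 this with
    | intro h1 h2 => linarith
  -- nonnegativity of the integrand on Ici 0
  have hnn : ∀ t ∈ Set.Ici (0:ℝ), 0 ≤ f t * g t := by
    intro t ht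
    rcases le_or_gt (f t) 0 with h0 | h0
    · have : f t = 0 := le_antisymm h0 (hf01 t).1
      simp [this]
    · have hlt : |t - t₀| < δ := by
        by_contra hge
        push_neg at hge
        have h2 : 1 ≤ |t - t₀| / δ := (one_le_div hδ).2 hge
        have h3 : f t ≤ 0 := by
          simp only [hf]
          have : 1 - |t - t₀| / δ ≤ 0 := by linarith
          simp [this]
        linarith
      exact mul_nonneg h0.le (by have := hglb t ht hlt; linarith)
  -- integrability of f * g
  have hfg_int : IntegrableOn (fun t => f t * g t) (Set.Ici 0) := by
    refine Integrable.bdd_mul (μ := volume.restrict (Set.Ici 0)) (c := 1) hgi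
      hfc.aestronglyMeasurable.restrict ?_
    exact ae_of_all _ fun t => by
      rw [Real.norm_eq_abs, abs_of_nonneg (hf01 t).1]; exact (hf01 t).2
  -- lower bound on Icc t₀ (t₀ + δ/2)
  have hsub : Set.Icc t₀ (t₀ + δ/2) ⊆ Set.Ici (0:ℝ) := fun t ht => le_trans ht₀ ht.1
  have hlow : ∀ t ∈ Set.Icc t₀ (t₀ + δ/2), g t₀ / 4 ≤ f t * g t := by
    intro t ht
    have habs : |t - t₀| ≤ δ/2 := by
      rw [abs_le]; constructor <;> [linarith [ht.1]; linarith [ht.2]]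
    have hfge : (1:ℝ)/2 ≤ f t := by
      have : |t - t₀| / δ ≤ 1/2 := by
        rw [div_le_iff₀ hδ]; linarith
      have : (1:ℝ)/2 ≤ 1 - |t - t₀| / δ := by linarith
      exact le_trans this (le_max_right _ _)
    have hgge : g t₀ / 2 ≤ g t :=
      (hglb t (hsub ht) (lt_of_le_of_lt habs (by linarith))).le
    calc g t₀ / 4 = (1/2) * (g t₀ / 2) := by ring
    _ ≤ f t * g t := by
        apply mul_le_mul hfge hgge (by linarith) (hf01 t).1
  have hmeas : MeasurableSet (Set.Icc t₀ (t₀ + δ/2)) := measurableSet_Icc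
  have hInt2 : IntegrableOn (fun t => f t * g t) (Set.Icc t₀ (t₀ + δ/2)) :=
    hfg_int.mono_set hsub
  have h1 : (g t₀ / 4) * (volume (Set.Icc t₀ (t₀ + δ/2))).toReal
      ≤ ∫ t in Set.Icc t₀ (t₀ + δ/2), f t * g t :=
    setIntegral_ge_of_const_le_real hmeas (by simp) hlow hInt2
  have h2 : ∫ t in Set.Icc t₀ (t₀ + δ/2), f t * g t ≤ ∫ t in Set.Ici 0, f t * g t := by
    refine setIntegral_mono_set hfg_int ?_ (HasSubset.Subset.eventuallyLE hsub)
    exact (ae_restrict_iff' measurableSet_Ici).2 (ae_of_all _ hnn)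
  have h3 : ∫ t in Set.Ici (0:ℝ), f t * g t = 0 := by
    refine h f hfc.continuousOn ⟨1, fun t _ => ?_⟩
    rw [abs_of_nonneg (hf01 t).1]; exact (hf01 t).2
  rw [h3] at h2
  rw [Real.volume_Icc] at h1
  have hvol : (ENNReal.ofReal (t₀ + δ/2 - t₀)).toReal = δ/2 := by
    rw [ENNReal.toReal_ofReal (by linarith)]; ring
  rw [hvol] at h1
  nlinarith

lemma sep18 (g : ℝ → ℝ) (hgc : ContinuousOn g (Set.Ici 0))
    (hgi : IntegrableOn g (Set.Ici 0))
    (h : ∀ f : ℝ → ℝ, ContinuousOn f (Set.Ici 0) →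
      (∃ M : ℝ, ∀ t ∈ Set.Ici (0:ℝ), |f t| ≤ M) →
      ∫ t in Set.Ici (0:ℝ), f t * g t = 0)
    {t₀ : ℝ} (ht₀ : 0 ≤ t₀) : g t₀ = 0 := by
  rcases lt_trichotomy (g t₀) 0 with hlt | he | hgt
  · exfalso
    refine sep_pos18 (fun t => -g t) (hgc.neg) hgi.neg ?_ ht₀ (by simpa using hlt)
    intro f hfc hfb
    have := h f hfc hfb
    simp only [mul_neg]
    rw [integral_neg, this, neg_zero]
  · exact he
  · exact absurd hgt (sep_pos18 g hgc hgi h ht₀)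

-- natural homogeneity from the functional equation
lemma nat_hom18 (K : ℝ → ℝ → ℝ)
    (hKc : ContinuousOn (fun p : ℝ × ℝ => K p.1 p.2) (Set.Ici 0 ×ˢ Set.Ici 0))
    (hKint : ∀ x : ℝ, 0 ≤ x → IntegrableOn (fun t => K t x) (Set.Ici 0))
    (H : ∀ ν : ℕ, 1 ≤ ν → ∀ x : ℝ, 0 ≤ x → ∀ f : ℝ → ℝ,
        ContinuousOn f (Set.Ici 0) → (∃ M : ℝ, ∀ t ∈ Set.Ici (0 : ℝ), |f t| ≤ M) →
        ∫ t in Set.Ici (0 : ℝ), f (t / ν) * K t (ν * x) =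
          ∫ t in Set.Ici (0 : ℝ), f t * K t x)
    (n : ℕ) (hn : 1 ≤ n) (t : ℝ) (ht : 0 ≤ t) (x : ℝ) (hx : 0 ≤ x) :
    (n : ℝ) * K ((n : ℝ) * t) ((n : ℝ) * x) = K t x := by
  have hnpos : (0:ℝ) < (n:ℝ) := by exact_mod_cast hn
  set g : ℝ → ℝ := fun s => (n:ℝ) * K ((n:ℝ) * s) ((n:ℝ) * x) - K s x with hg
  -- continuity of g
  have hc1 : ContinuousOn (fun s : ℝ => K ((n:ℝ) * s) ((n:ℝ) * x)) (Set.Ici 0) := by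
    refine hKc.comp (Continuous.continuousOn
      ((continuous_const.mul continuous_id).prodMk continuous_const)) ?_
    intro s hs
    exact ⟨mul_nonneg hnpos.le hs, mul_nonneg hnpos.le hx⟩
  have hgc : ContinuousOn g (Set.Ici 0) := by
    refine ContinuousOn.sub (continuousOn_const.mul hc1) ?_
    refine hKc.comp (Continuous.continuousOn
      (continuous_id.prodMk continuous_const)) ?_
    intro s hs
    exact ⟨hs, hx⟩
  -- integrability
  have hi1 : IntegrableOn (fun s : ℝ => K ((n:ℝ) * s) ((n:ℝ) * x)) (Set.Ici 0) :=
    intOn18 (fun u => K u ((n:ℝ)*x)) (hKint _ (mul_nonneg hnpos.le hx)) hnpos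
  have hgi : IntegrableOn g (Set.Ici 0) := (hi1.const_mul _).sub (hKint x hx)
  -- the key vanishing-integral property
  have key : ∀ f : ℝ → ℝ, ContinuousOn f (Set.Ici 0) →
      (∃ M : ℝ, ∀ t ∈ Set.Ici (0:ℝ), |f t| ≤ M) →
      ∫ s in Set.Ici (0:ℝ), f s * g s = 0 := by
    intro f hfc hfb
    have hfm : AEStronglyMeasurable f (volume.restrict (Set.Ici 0)) :=
      hfc.aestronglyMeasurable measurableSet_Ici
    obtain ⟨M, hM⟩ := hfb
    have hfb' : ∀ᵐ s ∂(volume.restrict (Set.Ici 0)), ‖f s‖ ≤ M :=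
      (ae_restrict_iff' measurableSet_Ici).2 (ae_of_all _ fun s hs => hM s hs)
    have hint1 : IntegrableOn (fun s => f s * ((n:ℝ) * K ((n:ℝ)*s) ((n:ℝ)*x))) (Set.Ici 0) :=
      Integrable.bdd_mul (μ := volume.restrict (Set.Ici 0)) (hi1.const_mul _) hfm hfb'
    have hint2 : IntegrableOn (fun s => f s * K s x) (Set.Ici 0) :=
      Integrable.bdd_mul (μ := volume.restrict (Set.Ici 0)) (hKint x hx) hfm hfb'
    have hsplit : ∫ s in Set.Ici (0:ℝ), f s * g s
        = (∫ s in Set.Ici (0:ℝ), f s * ((n:ℝ) * K ((n:ℝ)*s) ((n:ℝ)*x)))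
          - ∫ s in Set.Ici (0:ℝ), f s * K s x := by
      rw [← integral_sub hint1 hint2]
      congr 1; ext s; simp only [hg]; ring
    -- change of variables in the hypothesis
    have hH := H n hn x hx f hfc ⟨M, hM⟩
    have hcv : ∫ u in Set.Ici (0:ℝ), f (u / n) * K u ((n:ℝ) * x)
        = (n:ℝ) * ∫ s in Set.Ici (0:ℝ), f s * K ((n:ℝ)*s) ((n:ℝ)*x) := by
      rw [cov18 (fun u => f (u / n) * K u ((n:ℝ)*x)) hnpos]
      congr 1
      apply setIntegral_congr_fun measurableSet_Ici
      intro s _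
      dsimp only
      rw [mul_div_cancel_left₀ _ hnpos.ne']
    have h1 : ∫ s in Set.Ici (0:ℝ), f s * ((n:ℝ) * K ((n:ℝ)*s) ((n:ℝ)*x))
        = ∫ s in Set.Ici (0:ℝ), f s * K s x := by
      have : ∫ s in Set.Ici (0:ℝ), f s * ((n:ℝ) * K ((n:ℝ)*s) ((n:ℝ)*x))
          = (n:ℝ) * ∫ s in Set.Ici (0:ℝ), f s * K ((n:ℝ)*s) ((n:ℝ)*x) := by
        rw [← integral_const_mul]
        congr 1; ext s; ring
      rw [this, ← hcv, hH]
    rw [hsplit, h1, sub_self]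
  have := sep18 g hgc hgi key ht
  simp only [hg] at this
  linarith

/-- **Characterization of integral limit operators via kernel homogeneity.** For an
integral operator `Z(f)(x) = ∫_0^∞ f(t) K(t,x) dt` with continuous nonnegative integrable
kernel, the functional equation `Z(f(t/ν); νx) = Z(f(t); x)` (for all `ν ∈ ℕ, ν ≥ 1`,
`x ≥ 0` and bounded continuous `f`) holds iff `K(νt, νx) = (1/ν) K(t,x)` for all real
`ν > 0` and `t, x ≥ 0`. -/
theorem stmt_18 (K : ℝ → ℝ → ℝ)
    (hKc : ContinuousOn (fun p : ℝ × ℝ => K p.1 p.2) (Set.Ici 0 ×ˢ Set.Ici 0))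
    (hKnn : ∀ t ∈ Set.Ici (0 : ℝ), ∀ x ∈ Set.Ici (0 : ℝ), 0 ≤ K t x)
    (hKint : ∀ x : ℝ, 0 ≤ x → IntegrableOn (fun t => K t x) (Set.Ici 0)) :
    (∀ ν : ℕ, 1 ≤ ν → ∀ x : ℝ, 0 ≤ x → ∀ f : ℝ → ℝ,
        ContinuousOn f (Set.Ici 0) → (∃ M : ℝ, ∀ t ∈ Set.Ici (0 : ℝ), |f t| ≤ M) →
        ∫ t in Set.Ici (0 : ℝ), f (t / ν) * K t (ν * x) =
          ∫ t in Set.Ici (0 : ℝ), f t * K t x) ↔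
      (∀ ν : ℝ, 0 < ν → ∀ t : ℝ, 0 ≤ t → ∀ x : ℝ, 0 ≤ x →
        K (ν * t) (ν * x) = (1 / ν) * K t x) := by
  constructor
  · -- functional equation ⇒ homogeneity
    intro H ν hν t ht x hx
    have Hnat : ∀ n : ℕ, 1 ≤ n → ∀ t : ℝ, 0 ≤ t → ∀ x : ℝ, 0 ≤ x →
        (n : ℝ) * K ((n:ℝ) * t) ((n:ℝ) * x) = K t x :=
      fun n hn t ht x hx => nat_hom18 K hKc hKint H n hn t ht x hx
    -- rational homogeneity
    have Hrat : ∀ q : ℚ, 0 < q → (q : ℝ) * K ((q:ℝ) * t) ((q:ℝ) * x) = K t x := by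
      intro q hq
      set a : ℕ := q.num.toNat with ha
      set b : ℕ := q.den with hb
      have hbpos : 1 ≤ b := q.pos
      have hapos : 1 ≤ a := by
        have : 0 < q.num := Rat.num_pos.2 hq
        omega
      have haR : (0:ℝ) < (a:ℝ) := by exact_mod_cast hapos
      have hbR : (0:ℝ) < (b:ℝ) := by exact_mod_cast hbpos
      have hnum : (q.num : ℝ) = (a : ℝ) := by
        have h := Int.toNat_of_nonneg (Rat.num_pos.2 hq).le
        exact_mod_cast h.symm
      have hcast : (q : ℝ) = (a : ℝ) / (b : ℝ) := by
        rw [Rat.cast_def, hnum]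
      have h1 : (b:ℝ) * K t x = K (t / b) (x / b) := by
        have := Hnat b hbpos (t / b) (div_nonneg ht hbR.le) (x / b) (div_nonneg hx hbR.le)
        rw [mul_div_cancel₀ _ hbR.ne', mul_div_cancel₀ _ hbR.ne'] at this
        linarith
      have h2 : (a:ℝ) * K ((a:ℝ) * (t / b)) ((a:ℝ) * (x / b)) = K (t / b) (x / b) :=
        Hnat a hapos (t / b) (div_nonneg ht hbR.le) (x / b) (div_nonneg hx hbR.le)
      have hqt : (q:ℝ) * t = (a:ℝ) * (t / b) := by rw [hcast]; field_simp
      have hqx : (q:ℝ) * x = (a:ℝ) * (x / b) := by rw [hcast]; field_simp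
      rw [hqt, hqx, hcast, div_mul_eq_mul_div, div_eq_iff hbR.ne']
      linarith [h2.trans h1.symm]
    -- extend to reals by density/continuity
    set φ : ℝ → ℝ := fun c => c * K (c * t) (c * x) with hφ
    have hφc : ContinuousOn φ (Set.Ici 0) := by
      refine (continuousOn_id).mul (hKc.comp (Continuous.continuousOn ((continuous_id.mul continuous_const).prodMk (continuous_id.mul continuous_const))) ?_)
      intro c hc
      exact ⟨mul_nonneg hc ht, mul_nonneg hc hx⟩
    set S : Set ℝ := Set.Ioi (0:ℝ) ∩ Set.range ((↑) : ℚ → ℝ) with hS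
    have hSsub : S ⊆ Set.Ici (0:ℝ) := fun c hc => (Set.mem_Ioi.1 hc.1).le
    have hdense : Set.Ioi (0:ℝ) ⊆ closure S :=
      Rat.denseRange_cast.open_subset_closure_inter isOpen_Ioi
    have hνcl : ν ∈ closure S := hdense hν
    have hne : (𝓝[S] ν).NeBot := mem_closure_iff_nhdsWithin_neBot.1 hνcl
    have h1 : Tendsto φ (𝓝[S] ν) (𝓝 (φ ν)) :=
      (hφc ν hν.le).mono hSsub
    have h2 : Tendsto φ (𝓝[S] ν) (𝓝 (K t x)) := by
      refine Tendsto.congr' ?_ tendsto_const_nhds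
      filter_upwards [eventually_mem_nhdsWithin] with c hc
      obtain ⟨hcpos, q, rfl⟩ := hc
      exact (Hrat q (by exact_mod_cast Set.mem_Ioi.1 hcpos)).symm
    have hφν : φ ν = K t x := tendsto_nhds_unique h1 h2
    have : ν * K (ν * t) (ν * x) = K t x := hφν
    field_simp
    linarith
  · -- homogeneity ⇒ functional equation
    intro hom ν hν x hx f hfc hfb
    have hνR : (0:ℝ) < (ν:ℝ) := by exact_mod_cast hν
    rw [cov18 (fun u => f (u / ν) * K u ((ν:ℝ) * x)) hνR]
    have heq : Set.EqOn (fun s => f ((ν:ℝ) * s / ν) * K ((ν:ℝ) * s) ((ν:ℝ) * x))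
        (fun s => (1 / (ν:ℝ)) * (f s * K s x)) (Set.Ici 0) := by
      intro s hs
      dsimp only
      rw [mul_div_cancel_left₀ _ hνR.ne', hom ν hνR s hs x hx]
      ring
    rw [setIntegral_congr_fun measurableSet_Ici heq, integral_const_mul]
    field_simp
end
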